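/- Let n ≥ 1 and k ≥ 1 be integers, let σ_1,…,σ_k be permutations of [n] with feature vectors x_v assigned to nodes v ∈ [n], and let f_1,…,f_k be functions mapping feature vectors to [n]. For each j ∈ [k] let ε_j = (1/n)·|{v ∈ [n] : f_j(x_v) ≠ σ_j(v)}| be the misclassification rate of f_j. Fix a query r = (r_1,…,r_ℓ) ∈ [k]^ℓ, let s be uniformly random on [n], and run the iterative algorithm v_0 = s, v_i = f_{r_i}(x_{v_{i−1}}) for i = 1,…,ℓ. Then the probability that v_ℓ ≠ σ_r(s) is at most Σ_{i=1}^{ℓ} ε_{r_i}. -/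

import Mathlib

open scoped Classical

/-- `traceP σ r` is the composite permutation `σ_{r_ℓ} ∘ ⋯ ∘ σ_{r_1}` for the
sequence of relation types `r = (r_1, …, r_ℓ)` (the identity when `r = []`). -/
def traceP {n k : ℕ} (σ : Fin k → Equiv.Perm (Fin n)) : List (Fin k) → Equiv.Perm (Fin n)
  | [] => 1
  | j :: rest => traceP σ rest * σ j

/-- `runIter f x r s` runs the iterative algorithm `v_0 = s`, `v_i = f_{r_i}(x_{v_{i−1}})`
along the query `r` and returns `v_ℓ`. -/
def runIter {n k : ℕ} {F : Type*} (f : Fin k → F → Fin n) (x : Fin n → F) :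
    List (Fin k) → Fin n → Fin n
  | [], s => s
  | j :: rest, s => runIter f x rest (f j (x s))

/-- Errors compose: if each local classifier `f_j` has misclassification rate `ε_j`,
then for a uniformly random start `s` the iterative algorithm fails to output `σ_r(s)`
with probability at most `Σ_{i=1}^ℓ ε_{r_i}`. -/
theorem stmt8 (n k : ℕ) (hn : 1 ≤ n) (hk : 1 ≤ k) {F : Type*}
    (x : Fin n → F) (σ : Fin k → Equiv.Perm (Fin n)) (f : Fin k → F → Fin n)
    (r : List (Fin k)) :
    ((Finset.univ.filter fun s : Fin n => runIter f x r s ≠ traceP σ r s).card : ℝ) / n ≤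
      (r.map fun j =>
        ((Finset.univ.filter fun v : Fin n => f j (x v) ≠ σ j v).card : ℝ) / n).sum := by
  induction r with
  | nil => simp [runIter, traceP]
  | cons j rest ih =>
    have hsub : (Finset.univ.filter fun s : Fin n =>
        runIter f x (j :: rest) s ≠ traceP σ (j :: rest) s) ⊆
        (Finset.univ.filter fun v : Fin n => f j (x v) ≠ σ j v) ∪
        (Finset.univ.filter fun s : Fin n =>
          runIter f x rest s ≠ traceP σ rest s).image (σ j).symm := by
      intro s hs
      simp only [Finset.mem_filter, Finset.mem_univ, true_and, runIter, traceP,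
        Equiv.Perm.mul_apply] at hs
      by_cases h : f j (x s) = σ j s
      · refine Finset.mem_union_right _ ?_
        refine Finset.mem_image.2 ⟨σ j s, ?_, by simp⟩
        have hs' : runIter f x rest (f j (x s)) ≠ traceP σ rest (σ j s) := (Finset.mem_filter.1 hs).2
        rw [h] at hs'
        exact Finset.mem_filter.2 ⟨Finset.mem_univ _, hs'⟩
      · exact Finset.mem_union_left _ (by simpa using h)
    have hcard : (Finset.univ.filter fun s : Fin n =>
        runIter f x (j :: rest) s ≠ traceP σ (j :: rest) s).card ≤
        (Finset.univ.filter fun v : Fin n => f j (x v) ≠ σ j v).card +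
        (Finset.univ.filter fun s : Fin n =>
          runIter f x rest s ≠ traceP σ rest s).card := by
      have himg : ((Finset.univ.filter fun s : Fin n =>
          runIter f x rest s ≠ traceP σ rest s).image (σ j).symm).card =
          (Finset.univ.filter fun s : Fin n =>
            runIter f x rest s ≠ traceP σ rest s).card :=
        Finset.card_image_of_injective _ (σ j).symm.injective
      calc _ ≤ _ := Finset.card_le_card hsub
        _ ≤ _ := Finset.card_union_le _ _
        _ ≤ _ := by rw [himg]
    have hn' : (0:ℝ) < n := by exact_mod_cast hn
    rw [List.map_cons, List.sum_cons]
    have h1 : ((Finset.univ.filter fun s : Fin n =>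
        runIter f x (j :: rest) s ≠ traceP σ (j :: rest) s).card : ℝ) / n ≤
        (((Finset.univ.filter fun v : Fin n => f j (x v) ≠ σ j v).card : ℝ) +
        ((Finset.univ.filter fun s : Fin n =>
          runIter f x rest s ≠ traceP σ rest s).card : ℝ)) / n := by
      gcongr
      exact_mod_cast hcard
    rw [add_div] at h1
    exact h1.trans (by gcongr)
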